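/- Let G = G_{m,n} = S_m □ P_n with m ≥ 3 and n even. Then the radio number of G satisfies rn(G) ≥ (m n²)/2 + n − 1. -/

import Mathlib

/-- The star graph on `m` vertices with center `0`. -/
def starGraph (m : ℕ) : SimpleGraph (Fin m) :=
  SimpleGraph.fromRel (fun a _ => (a : ℕ) = 0)

/-- The path graph on `n` vertices `0, 1, …, n-1`. -/
def pathGraph' (n : ℕ) : SimpleGraph (Fin n) :=
  SimpleGraph.fromRel (fun a b => (a : ℕ) + 1 = b)

/-- The stacked-book graph `G_{m,n} = S_m □ P_n`. -/
def bookGraph (m n : ℕ) : SimpleGraph (Fin m × Fin n) :=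
  (starGraph m).boxProd (pathGraph' n)

/-- `f` is a radio labeling of `G` for diameter `D`:
`|f u - f v| ≥ D + 1 - d(u,v)` for all distinct `u, v`. -/
def IsRadioLabeling {V : Type*} (G : SimpleGraph V) (D : ℕ) (f : V → ℕ) : Prop :=
  ∀ u v : V, u ≠ v → (D : ℤ) + 1 - G.dist u v ≤ |(f u : ℤ) - (f v : ℤ)|

/-- The span of a labeling: maximum label minus minimum label. -/
noncomputable def span {V : Type*} (f : V → ℕ) : ℕ :=
  sSup (Set.range f) - sInf (Set.range f)

/-- The radio number of the stacked-book graph `G_{m,n}` (whose diameter is `n+1`). -/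
noncomputable def rnBook (m n : ℕ) : ℕ :=
  sInf {s | ∃ f : Fin m × Fin n → ℕ, IsRadioLabeling (bookGraph m n) (n + 1) f ∧ span f = s}





lemma book_adj {m n : ℕ} {x y : Fin m × Fin n} :
    (bookGraph m n).Adj x y ↔
      ((x.1 ≠ y.1 ∧ ((x.1:ℕ) = 0 ∨ (y.1:ℕ) = 0)) ∧ x.2 = y.2) ∨
      ((x.2 ≠ y.2 ∧ ((x.2:ℕ) + 1 = y.2 ∨ (y.2:ℕ) + 1 = x.2)) ∧ x.1 = y.1) := by
  cases x; cases y
  simp [bookGraph, SimpleGraph.boxProd_adj, starGraph, pathGraph', SimpleGraph.fromRel_adj]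

-- walk along the path coordinate
lemma walk_path {m n : ℕ} (a : Fin m) : ∀ (d : ℕ) (i j : Fin n), (j:ℕ) = (i:ℕ) + d →
    ∃ w : (bookGraph m n).Walk (a, i) (a, j), w.length ≤ d := by
  intro d
  induction d with
  | zero =>
    intro i j h
    have : i = j := Fin.ext (by omega)
    subst this
    exact ⟨SimpleGraph.Walk.nil, by simp⟩
  | succ d ih =>
    intro i j h
    have hmid : (i:ℕ) + d < n := by have := j.isLt; omega
    set mid : Fin n := ⟨(i:ℕ) + d, hmid⟩ with hmiddef
    obtain ⟨w1, hw1⟩ := ih i mid rfl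
    have hadj : (bookGraph m n).Adj (a, mid) (a, j) := by
      rw [book_adj]
      right
      refine ⟨⟨?_, Or.inl (by simp [hmiddef]; omega)⟩, rfl⟩
      intro hc
      have hcc : mid = j := hc
      have : (mid:ℕ) = (j:ℕ) := by rw [hcc]
      simp [hmiddef] at this; omega
    exact ⟨w1.concat hadj, by rw [SimpleGraph.Walk.length_concat]; omega⟩

lemma walk_path' {m n : ℕ} (a : Fin m) (i j : Fin n) :
    ∃ w : (bookGraph m n).Walk (a, i) (a, j), (w.length : ℤ) ≤ |((i:ℕ):ℤ) - ((j:ℕ):ℤ)| := by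
  rcases le_total (i:ℕ) (j:ℕ) with h | h
  · obtain ⟨w, hw⟩ := walk_path a ((j:ℕ) - (i:ℕ)) i j (by omega)
    exact ⟨w, by rw [abs_sub_comm, abs_of_nonneg (by push_cast; omega)]; push_cast; omega⟩
  · obtain ⟨w, hw⟩ := walk_path a ((i:ℕ) - (j:ℕ)) j i (by omega)
    refine ⟨w.reverse, ?_⟩
    rw [SimpleGraph.Walk.length_reverse, abs_of_nonneg (by push_cast; omega)]
    push_cast; omega

lemma walk_star {m n : ℕ} [NeZero m] (a b : Fin m) (i : Fin n) :
    ∃ w : (bookGraph m n).Walk (a, i) (b, i),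
      (w.length : ℤ) ≤ (if (a:ℕ) = 0 then 0 else 1) + (if (b:ℕ) = 0 then 0 else 1) := by
  by_cases hab : a = b
  · subst hab; exact ⟨SimpleGraph.Walk.nil, by positivity⟩
  · have adj0 : ∀ c d : Fin m, c ≠ d → ((c:ℕ) = 0 ∨ (d:ℕ) = 0) →
        (bookGraph m n).Adj (c, i) (d, i) := by
      intro c d h1 h2; rw [book_adj]; exact Or.inl ⟨⟨h1, h2⟩, rfl⟩
    by_cases ha : (a:ℕ) = 0
    · have hb : (b:ℕ) ≠ 0 := fun hc => hab (Fin.ext (by omega))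
      exact ⟨SimpleGraph.Walk.cons (adj0 a b hab (Or.inl ha)) SimpleGraph.Walk.nil,
        by simp [ha, hb]⟩
    · by_cases hb : (b:ℕ) = 0
      · exact ⟨SimpleGraph.Walk.cons (adj0 a b hab (Or.inr hb)) SimpleGraph.Walk.nil,
          by simp [ha, hb]⟩
      · have h0a : (0 : Fin m) ≠ a := by
          intro hc; apply ha; rw [← hc]; simp
        have h0b : (0 : Fin m) ≠ b := by
          intro hc; apply hb; rw [← hc]; simp
        refine ⟨SimpleGraph.Walk.cons (adj0 a 0 (Ne.symm h0a) (Or.inr (by simp)))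
          (SimpleGraph.Walk.cons (adj0 0 b h0b (Or.inl (by simp))) SimpleGraph.Walk.nil), ?_⟩
        simp [ha, hb]

lemma dist_bound {m n : ℕ} [NeZero m] (a b : Fin m) (i j : Fin n) :
    ((bookGraph m n).dist (a, i) (b, j) : ℤ) ≤
      (if (a:ℕ) = 0 then 0 else 1) + (if (b:ℕ) = 0 then 0 else 1) + |((i:ℕ):ℤ) - ((j:ℕ):ℤ)| := by
  obtain ⟨w1, hw1⟩ := walk_star (n := n) a b i
  obtain ⟨w2, hw2⟩ := walk_path' b i j
  have hd := (bookGraph m n).dist_le (w1.append w2)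
  rw [SimpleGraph.Walk.length_append] at hd
  have : ((bookGraph m n).dist (a, i) (b, j) : ℤ) ≤ (w1.length : ℤ) + w2.length := by
    exact_mod_cast hd
  linarith

open Finset

-- double counting: if every k in C has k or k+1 in Qs, then |C| ≤ 2|Qs|
lemma double_count (C Qs : Finset ℕ) (h : ∀ k ∈ C, k ∈ Qs ∨ k + 1 ∈ Qs) :
    C.card ≤ 2 * Qs.card := by
  have key : C.card ≤ 2 * (C.image (fun k => if k ∈ Qs then k else k + 1)).card := by
    apply Finset.card_le_mul_card_image
    intro b _
    have hsub : (C.filter (fun a => (if a ∈ Qs then a else a + 1) = b)) ⊆ {b, b - 1} := by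
      intro k hk
      rw [Finset.mem_filter] at hk
      rcases hk with ⟨_, hk2⟩
      simp only [Finset.mem_insert, Finset.mem_singleton]
      split at hk2 <;> omega
    calc (C.filter (fun a => (if a ∈ Qs then a else a + 1) = b)).card
        ≤ ({b, b-1} : Finset ℕ).card := Finset.card_le_card hsub
      _ ≤ 2 := Finset.card_insert_le _ _ |>.trans (by simp)
  refine key.trans (Nat.mul_le_mul_left 2 (Finset.card_le_card ?_))
  intro q hq
  rw [Finset.mem_image] at hq
  obtain ⟨k, hk, hkq⟩ := hq
  rcases h k hk with h1 | h1 <;> [skip; skip] <;>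
    · by_cases hkQ : k ∈ Qs <;> simp [hkQ] at hkq <;> subst hkq <;> first | exact h1 | tauto
  
-- Gauss-type: sum of min
lemma sum_min_eq (p : ℕ) (hp : 1 ≤ p) :
    ∑ t ∈ range (2 * p - 1), min (t + 1) (2 * p - 1 - t) = p * p := by
  have hsplit : ∑ t ∈ range (2 * p - 1), min (t + 1) (2 * p - 1 - t)
      = ∑ t ∈ range p, min (t + 1) (2 * p - 1 - t)
        + ∑ t ∈ Finset.Ico p (2 * p - 1), min (t + 1) (2 * p - 1 - t) := by
    rw [Finset.range_eq_Ico, ← Finset.sum_Ico_consecutive _ (Nat.zero_le p) (by omega),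
      ← Finset.range_eq_Ico]
  have h1 : ∑ t ∈ range p, min (t + 1) (2 * p - 1 - t) = ∑ t ∈ range p, (t + 1) := by
    apply Finset.sum_congr rfl
    intro t ht
    rw [Finset.mem_range] at ht
    omega
  have h2 : ∑ t ∈ Finset.Ico p (2 * p - 1), min (t + 1) (2 * p - 1 - t)
      = ∑ s ∈ range (p - 1), (p - 1 - s) := by
    rw [Finset.sum_Ico_eq_sum_range]
    have : 2 * p - 1 - p = p - 1 := by omega
    rw [this]
    apply Finset.sum_congr rfl
    intro s hs
    rw [Finset.mem_range] at hs
    omega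
  have h3 : ∑ s ∈ range (p - 1), (p - 1 - s) = ∑ s ∈ range (p - 1), (s + 1) := by
    have := Finset.sum_range_reflect (fun u => u + 1) (p - 1)
    calc ∑ s ∈ range (p-1), (p - 1 - s) = ∑ s ∈ range (p-1), (p - 1 - 1 - s + 1) := by
          apply Finset.sum_congr rfl; intro s hs; rw [Finset.mem_range] at hs; omega
      _ = ∑ s ∈ range (p-1), (s + 1) := this
  have g1 : (∑ t ∈ range p, t) * 2 = p * (p - 1) := Finset.sum_range_id_mul_two p
  have g2 : (∑ t ∈ range (p-1), t) * 2 = (p - 1) * (p - 1 - 1) := Finset.sum_range_id_mul_two _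
  have e1 : ∑ t ∈ range p, (t + 1) = (∑ t ∈ range p, t) + p := by
    rw [Finset.sum_add_distrib]; simp
  have e2 : ∑ t ∈ range (p-1), (t + 1) = (∑ t ∈ range (p-1), t) + (p - 1) := by
    rw [Finset.sum_add_distrib]; simp
  rw [hsplit, h1, h2, h3, e1, e2]
  set A := ∑ t ∈ range p, t
  set B := ∑ t ∈ range (p-1), t
  -- 2A = p(p-1), 2B = (p-1)(p-2); goal A + p + (B + (p-1)) = p²
  obtain ⟨q, rfl⟩ : ∃ q, p = q + 1 := ⟨p - 1, by omega⟩
  simp only [Nat.add_sub_cancel] at g1 g2 ⊢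
  rcases Nat.eq_zero_or_eq_succ_pred q with hq | hq
  · subst hq; omega
  · obtain ⟨r, rfl⟩ : ∃ r, q = r + 1 := ⟨q - 1, hq⟩
    simp only [Nat.add_sub_cancel] at g2
    nlinarith [g1, g2]

open Finset

section Counting

-- count in Fin n of elements ≤ t
lemma finCountLe (n t : ℕ) (ht : t < n) :
    ((univ : Finset (Fin n)).filter (fun (j : Fin n) => (j : ℕ) ≤ t)).card = t + 1 := by
  have himg : ((univ : Finset (Fin n)).filter (fun (j : Fin n) => (j : ℕ) ≤ t)).image Fin.val
      = range (t + 1) := by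
    ext q
    simp only [Finset.mem_image, Finset.mem_filter, Finset.mem_univ, true_and, Finset.mem_range]
    constructor
    · rintro ⟨j, hj, rfl⟩; omega
    · intro hq; exact ⟨⟨q, by omega⟩, by simpa using by omega⟩
  rw [← Finset.card_image_of_injective _ Fin.val_injective, himg, Finset.card_range]

lemma finCountGt (n t : ℕ) (ht : t < n) :
    ((univ : Finset (Fin n)).filter (fun (j : Fin n) => t < (j : ℕ))).card = n - 1 - t := by
  have himg : ((univ : Finset (Fin n)).filter (fun (j : Fin n) => t < (j : ℕ))).image Fin.val
      = Finset.Ico (t + 1) n := by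
    ext q
    simp only [Finset.mem_image, Finset.mem_filter, Finset.mem_univ, true_and, Finset.mem_Ico]
    constructor
    · rintro ⟨j, hj, rfl⟩; exact ⟨by omega, j.isLt⟩
    · intro hq; exact ⟨⟨q, hq.2⟩, by simpa using hq.1, rfl⟩
  rw [← Finset.card_image_of_injective _ Fin.val_injective, himg, Nat.card_Ico]
  omega

lemma finCountZero (m : ℕ) [NeZero m] :
    ((univ : Finset (Fin m)).filter (fun (a : Fin m) => (a : ℕ) = 0)).card = 1 := by
  have : ((univ : Finset (Fin m)).filter (fun (a : Fin m) => (a : ℕ) = 0)) = {0} := by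
    ext a
    simp only [Finset.mem_filter, Finset.mem_univ, true_and, Finset.mem_singleton]
    constructor
    · intro h; exact Fin.ext (by simpa using h)
    · rintro rfl; simp
  rw [this, Finset.card_singleton]

lemma filterSnd {α β : Type*} [Fintype α] [Fintype β] [DecidableEq α] [DecidableEq β]
    (P : β → Prop) [DecidablePred P] :
    ((univ : Finset (α × β)).filter (fun w => P w.2)).card
      = Fintype.card α * ((univ : Finset β).filter P).card := by
  have : ((univ : Finset (α × β)).filter (fun w => P w.2))
      = (univ : Finset α) ×ˢ ((univ : Finset β).filter P) := by
    ext ⟨a, b⟩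
    simp [Finset.mem_product]
  rw [this, Finset.card_product, Finset.card_univ]

lemma filterFst {α β : Type*} [Fintype α] [Fintype β] [DecidableEq α] [DecidableEq β]
    (P : α → Prop) [DecidablePred P] :
    ((univ : Finset (α × β)).filter (fun w => P w.1)).card
      = ((univ : Finset α).filter P).card * Fintype.card β := by
  have : ((univ : Finset (α × β)).filter (fun w => P w.1))
      = ((univ : Finset α).filter P) ×ˢ (univ : Finset β) := by
    ext ⟨a, b⟩
    simp [Finset.mem_product]
  rw [this, Finset.card_product, Finset.card_univ]

lemma count_transfer {V : Type*} [Fintype V] [DecidableEq V] (N : ℕ) (v : ℕ → V)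
    (P : V → Prop) [DecidablePred P]
    (hinj : ∀ q1, q1 < N → ∀ q2, q2 < N → v q1 = v q2 → q1 = q2)
    (hsurj : ∀ w : V, ∃ q, q < N ∧ v q = w) :
    ((range N).filter (fun q => P (v q))).card = ((univ : Finset V).filter P).card := by
  apply Finset.card_bij (fun q _ => v q)
  · intro q hq
    rw [Finset.mem_filter] at hq ⊢
    exact ⟨Finset.mem_univ _, hq.2⟩
  · intro q1 h1 q2 h2 he
    rw [Finset.mem_filter, Finset.mem_range] at h1 h2
    exact hinj q1 h1.1 q2 h2.1 he
  · intro w hw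
    rw [Finset.mem_filter] at hw
    obtain ⟨q, hq, hv⟩ := hsurj w
    exact ⟨q, by rw [Finset.mem_filter, Finset.mem_range]; exact ⟨hq, by rw [hv]; exact hw.2⟩, hv⟩

lemma cardFstZero (m n : ℕ) [NeZero m] :
    ((univ : Finset (Fin m × Fin n)).filter (fun w => (w.1 : ℕ) = 0)).card = n := by
  have h : ((univ : Finset (Fin m × Fin n)).filter (fun w => (w.1 : ℕ) = 0))
      = ((univ : Finset (Fin m)).filter (fun (a : Fin m) => (a : ℕ) = 0)) ×ˢ (univ : Finset (Fin n)) := by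
    ext ⟨a, b⟩
    simp [Finset.mem_product]
  rw [h, Finset.card_product, Finset.card_univ, Fintype.card_fin, finCountZero, one_mul]

lemma cardSndLe (m n t : ℕ) (ht : t < n) :
    ((univ : Finset (Fin m × Fin n)).filter (fun w => (w.2 : ℕ) ≤ t)).card = m * (t + 1) := by
  have h : ((univ : Finset (Fin m × Fin n)).filter (fun w => (w.2 : ℕ) ≤ t))
      = (univ : Finset (Fin m)) ×ˢ ((univ : Finset (Fin n)).filter (fun (j : Fin n) => (j : ℕ) ≤ t)) := by
    ext ⟨a, b⟩
    simp [Finset.mem_product]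
  rw [h, Finset.card_product, Finset.card_univ, Fintype.card_fin, finCountLe n t ht]

lemma cardSndGt (m n t : ℕ) (ht : t < n) :
    ((univ : Finset (Fin m × Fin n)).filter (fun w => t < (w.2 : ℕ))).card = m * (n - 1 - t) := by
  have h : ((univ : Finset (Fin m × Fin n)).filter (fun w => t < (w.2 : ℕ)))
      = (univ : Finset (Fin m)) ×ˢ ((univ : Finset (Fin n)).filter (fun (j : Fin n) => t < (j : ℕ))) := by
    ext ⟨a, b⟩
    simp [Finset.mem_product]
  rw [h, Finset.card_product, Finset.card_univ, Fintype.card_fin, finCountGt n t ht]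

end Counting



lemma span_lower (m n p : ℕ) (hm : 3 ≤ m) (hp : 1 ≤ p) (hnp : n = 2 * p)
    (f : Fin m × Fin n → ℕ) (hf : IsRadioLabeling (bookGraph m n) (n + 1) f) :
    2 * m * p ^ 2 + 2 * p - 1 ≤ span f := by
  haveI : NeZero m := ⟨by omega⟩
  haveI : NeZero n := ⟨by omega⟩
  set N := m * n with hN
  have hn2 : 2 ≤ n := by omega
  have hN6 : 6 ≤ N := le_trans (by norm_num) (Nat.mul_le_mul hm hn2)
  -- diameter bound
  have hdiam : ∀ u w : Fin m × Fin n, ((bookGraph m n).dist u w : ℤ) ≤ (n : ℤ) + 1 := by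
    rintro ⟨a, i⟩ ⟨b, j⟩
    have h3 := dist_bound a b i j
    have hi : (i : ℕ) < n := i.isLt
    have hj : (j : ℕ) < n := j.isLt
    have habs : |((i:ℕ):ℤ) - ((j:ℕ):ℤ)| ≤ (n:ℤ) - 1 := by
      rw [abs_le]; constructor <;> push_cast <;> omega
    split_ifs at h3 <;> linarith
  -- f injective
  have hfinj : Function.Injective f := by
    intro u w huw
    by_contra hne
    have h1 := hf u w hne
    rw [huw, sub_self, abs_zero] at h1
    have := hdiam u w
    push_cast at h1
    linarith
  -- sorted enumeration
  set tf : Finset ℕ := Finset.image f Finset.univ with htf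
  have htc : tf.card = N := by
    rw [htf, Finset.card_image_of_injective _ hfinj, Finset.card_univ]
    simp [hN]
  set o := tf.orderIsoOfFin htc with ho
  set v : ℕ → Fin m × Fin n :=
    fun q => if h : q < N then Function.invFun f ((o ⟨q, h⟩ : tf) : ℕ) else (0, 0) with hv
  have hfv : ∀ q (hq : q < N), f (v q) = ((o ⟨q, hq⟩ : tf) : ℕ) := by
    intro q hq
    rw [hv]
    simp only [dif_pos hq]
    apply Function.invFun_eq
    have hmem : ((o ⟨q, hq⟩ : tf) : ℕ) ∈ Finset.image f Finset.univ := (o ⟨q, hq⟩).2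
    obtain ⟨a, -, ha⟩ := Finset.mem_image.1 hmem
    exact ⟨a, ha⟩
  have hmono : ∀ q, q + 1 < N → f (v q) < f (v (q + 1)) := by
    intro q hq
    rw [hfv q (by omega), hfv (q + 1) hq]
    have hlt : (⟨q, by omega⟩ : Fin N) < ⟨q + 1, hq⟩ := by simp [Fin.lt_def]
    exact o.strictMono hlt
  have hvinj : ∀ q1, q1 < N → ∀ q2, q2 < N → v q1 = v q2 → q1 = q2 := by
    intro q1 h1 q2 h2 he
    have hfe := congrArg f he
    rw [hfv q1 h1, hfv q2 h2] at hfe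
    have : (⟨q1, h1⟩ : Fin N) = ⟨q2, h2⟩ := o.injective (Subtype.ext hfe)
    simpa using congrArg Fin.val this
  have hvsurj : ∀ w : Fin m × Fin n, ∃ q, q < N ∧ v q = w := by
    intro w
    have hw : f w ∈ tf := Finset.mem_image_of_mem f (Finset.mem_univ w)
    obtain ⟨k, hk⟩ := o.surjective ⟨f w, hw⟩
    refine ⟨k.1, k.2, ?_⟩
    apply hfinj
    rw [hfv k.1 k.2, Fin.eta, hk]
  -- sequences
  set iv : ℕ → ℕ := fun q => ((v q).2 : ℕ) with hiv
  set ev : ℕ → ℤ := fun q => if ((v q).1 : ℕ) = 0 then 1 else 0 with hev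
  have hivlt : ∀ q, iv q < n := fun q => (v q).2.isLt
  have hev01 : ∀ q, 0 ≤ ev q ∧ ev q ≤ 1 := by
    intro q; by_cases h : ((v q).1 : ℕ) = 0 <;> simp only [hev, h] <;> norm_num
  -- step bound
  have hstep : ∀ k, k + 1 < N →
      ((n : ℤ) + 2) - ((1 - ev k) + (1 - ev (k + 1)) + |(iv (k + 1) : ℤ) - (iv k : ℤ)|)
        ≤ (f (v (k + 1)) : ℤ) - f (v k) := by
    intro k hk
    have hne : v k ≠ v (k + 1) := fun hc => by
      have := hvinj k (by omega) (k + 1) hk hc; omega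
    have h1 := hf (v k) (v (k + 1)) hne
    have hmlt := hmono k hk
    have h2 : |(f (v k) : ℤ) - f (v (k + 1))| = (f (v (k + 1)) : ℤ) - f (v k) := by
      rw [abs_sub_comm, abs_of_nonneg (by push_cast; omega)]
    have h3 := dist_bound (v k).1 (v (k + 1)).1 (v k).2 (v (k + 1)).2
    simp only [Prod.mk.eta] at h3
    rw [h2] at h1
    have he1 : (1 : ℤ) - ev k = (if ((v k).1 : ℕ) = 0 then 0 else 1) := by
      by_cases h : ((v k).1 : ℕ) = 0 <;> simp only [hev, h] <;> norm_num
    have he2 : (1 : ℤ) - ev (k + 1) = (if ((v (k + 1)).1 : ℕ) = 0 then 0 else 1) := by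
      by_cases h : ((v (k + 1)).1 : ℕ) = 0 <;> simp only [hev, h] <;> norm_num
    have habs : |(iv (k + 1) : ℤ) - (iv k : ℤ)| = |((v k).2 : ℤ) - ((v (k + 1)).2 : ℤ)| := by
      rw [hiv, abs_sub_comm]
    push_cast at h1 ⊢
    rw [he1, he2, habs]
    push_cast
    linarith
  -- telescoping
  have htel : (f (v (N - 1)) : ℤ) - f (v 0)
      = ∑ k ∈ range (N - 1), ((f (v (k + 1)) : ℤ) - f (v k)) := by
    have := Finset.sum_range_sub (fun q => (f (v q) : ℤ)) (N - 1)
    simpa using this.symm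
  have hsum : ∑ k ∈ range (N - 1),
      (((n : ℤ) + 2) - ((1 - ev k) + (1 - ev (k + 1)) + |(iv (k + 1) : ℤ) - (iv k : ℤ)|))
        ≤ (f (v (N - 1)) : ℤ) - f (v 0) := by
    rw [htel]
    apply Finset.sum_le_sum
    intro k hk
    rw [Finset.mem_range] at hk
    exact hstep k (by omega)
  -- expand
  set S1 := ∑ k ∈ range (N - 1), ev k with hS1
  set S2 := ∑ k ∈ range (N - 1), ev (k + 1) with hS2
  set S3 := ∑ k ∈ range (N - 1), |(iv (k + 1) : ℤ) - (iv k : ℤ)| with hS3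
  have hexp : ∑ k ∈ range (N - 1),
      (((n : ℤ) + 2) - ((1 - ev k) + (1 - ev (k + 1)) + |(iv (k + 1) : ℤ) - (iv k : ℤ)|))
        = ((N : ℤ) - 1) * ((n : ℤ) + 2) - (2 * ((N : ℤ) - 1) - S1 - S2) - S3 := by
    simp only [Finset.sum_sub_distrib, Finset.sum_add_distrib, Finset.sum_const,
      Finset.card_range, nsmul_eq_mul]
    have hc : ((N - 1 : ℕ) : ℤ) = (N : ℤ) - 1 := by
      push_cast [Nat.cast_sub (show 1 ≤ N by omega)]; ring
    rw [hc, ← hS1, ← hS2, ← hS3]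
    ring
  -- evaluate S1, S2 via total count of centers
  have hS0 : ∑ q ∈ range N, ev q = (n : ℤ) := by
    have h1 : ∑ q ∈ range N, ev q
        = (((range N).filter (fun q => ((v q).1 : ℕ) = 0)).card : ℤ) := by
      simp only [hev]
      rw [Finset.sum_boole]
    rw [h1, count_transfer N v (fun w => (w.1 : ℕ) = 0) hvinj hvsurj, cardFstZero m n]
  have hE1 : S1 = (n : ℤ) - ev (N - 1) := by
    have h := Finset.sum_range_succ ev (N - 1)
    rw [show N - 1 + 1 = N from by omega] at h
    have h2 := hS0
    rw [h] at h2
    rw [hS1]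
    linarith
  have hE2 : S2 = (n : ℤ) - ev 0 := by
    have h := Finset.sum_range_succ' ev (N - 1)
    rw [show N - 1 + 1 = N from by omega] at h
    have h2 := hS0
    rw [h] at h2
    rw [hS2]
    linarith
  -- crossing decomposition
  set Xt : ℕ → Finset ℕ := fun t => (range (N - 1)).filter
    (fun k => min (iv k) (iv (k + 1)) ≤ t ∧ t < max (iv k) (iv (k + 1))) with hXt
  have hDk : ∀ k, k + 1 < N → |(iv (k + 1) : ℤ) - (iv k : ℤ)| =
      (((range (n - 1)).filter (fun t => min (iv k) (iv (k + 1)) ≤ t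
        ∧ t < max (iv k) (iv (k + 1)))).card : ℤ) := by
    intro k hk
    have hset : (range (n - 1)).filter (fun t => min (iv k) (iv (k + 1)) ≤ t
        ∧ t < max (iv k) (iv (k + 1)))
        = Finset.Ico (min (iv k) (iv (k + 1))) (max (iv k) (iv (k + 1))) := by
      ext q
      simp only [Finset.mem_filter, Finset.mem_range, Finset.mem_Ico]
      have h1 := hivlt k
      have h2 := hivlt (k + 1)
      constructor
      · rintro ⟨-, hq⟩; exact hq
      · intro hq; exact ⟨by omega, hq⟩
    rw [hset, Nat.card_Ico]
    rcases le_total (iv k) (iv (k + 1)) with h | h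
    · rw [abs_of_nonneg (by push_cast; omega)]; push_cast; omega
    · rw [abs_of_nonpos (by push_cast; omega)]; push_cast; omega
  have hS3N : S3 = ((∑ t ∈ range (n - 1), (Xt t).card : ℕ) : ℤ) := by
    rw [hS3, Finset.sum_congr rfl
      (fun k hk => hDk k (by rw [Finset.mem_range] at hk; omega))]
    rw [← Nat.cast_sum]
    congr 1
    simp only [hXt, Finset.card_filter]
    exact Finset.sum_comm
  -- per-threshold bounds
  have hside : ∀ t, ∀ k ∈ Xt t,
      k ∈ (range N).filter (fun q => iv q ≤ t) ∨ k + 1 ∈ (range N).filter (fun q => iv q ≤ t) := by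
    intro t k hk
    rw [hXt, Finset.mem_filter, Finset.mem_range] at hk
    obtain ⟨hkr, hmin, -⟩ := hk
    by_cases h : iv k ≤ t
    · left; rw [Finset.mem_filter, Finset.mem_range]; exact ⟨by omega, h⟩
    · right; rw [Finset.mem_filter, Finset.mem_range]; exact ⟨by omega, by omega⟩
  have hside' : ∀ t, ∀ k ∈ Xt t,
      k ∈ (range N).filter (fun q => t < iv q) ∨ k + 1 ∈ (range N).filter (fun q => t < iv q) := by
    intro t k hk
    rw [hXt, Finset.mem_filter, Finset.mem_range] at hk
    obtain ⟨hkr, -, hmax⟩ := hk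
    by_cases h : t < iv k
    · left; rw [Finset.mem_filter, Finset.mem_range]; exact ⟨by omega, h⟩
    · right; rw [Finset.mem_filter, Finset.mem_range]; exact ⟨by omega, by omega⟩
  have hcardL : ∀ t, t < n → ((range N).filter (fun q => iv q ≤ t)).card = m * (t + 1) := by
    intro t ht
    have h1 : ((range N).filter (fun q => iv q ≤ t)).card
        = ((univ : Finset (Fin m × Fin n)).filter (fun w => (w.2 : ℕ) ≤ t)).card := by
      simp only [hiv]
      exact count_transfer N v (fun w => (w.2 : ℕ) ≤ t) hvinj hvsurj
    rw [h1, cardSndLe m n t ht]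
  have hcardR : ∀ t, t < n → ((range N).filter (fun q => t < iv q)).card = m * (n - 1 - t) := by
    intro t ht
    have h1 : ((range N).filter (fun q => t < iv q)).card
        = ((univ : Finset (Fin m × Fin n)).filter (fun w => t < (w.2 : ℕ))).card := by
      simp only [hiv]
      exact count_transfer N v (fun w => t < (w.2 : ℕ)) hvinj hvsurj
    rw [h1, cardSndGt m n t ht]
  have hboundLR : ∀ t ∈ (range (n - 1)).erase (p - 1),
      (Xt t).card ≤ 2 * (m * min (t + 1) (n - 1 - t)) := by
    intro t ht
    rw [Finset.mem_erase, Finset.mem_range] at ht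
    obtain ⟨htne, htlt⟩ := ht
    by_cases hcase : t < p - 1
    · have hmin : min (t + 1) (n - 1 - t) = t + 1 := by omega
      rw [hmin]
      exact le_trans (double_count (Xt t) _ (hside t)) (by rw [hcardL t (by omega)])
    · have hmin : min (t + 1) (n - 1 - t) = n - 1 - t := by omega
      rw [hmin]
      exact le_trans (double_count (Xt t) _ (hside' t)) (by rw [hcardR t (by omega)])
  have hboundM : (Xt (p - 1)).card ≤ N - 1 := by
    rw [hXt]
    exact le_trans (Finset.card_filter_le _ _) (by rw [Finset.card_range])
  have hmidmem : (p - 1) ∈ range (n - 1) := by rw [Finset.mem_range]; omega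
  have hsum_min_erase : ∑ t ∈ (range (n - 1)).erase (p - 1), min (t + 1) (n - 1 - t)
      = p * p - p := by
    have h := Finset.add_sum_erase (range (n - 1)) (fun t => min (t + 1) (n - 1 - t)) hmidmem
    have hfull : ∑ t ∈ range (n - 1), min (t + 1) (n - 1 - t) = p * p := by
      have h2 := sum_min_eq p hp
      have h3 : n - 1 = 2 * p - 1 := by omega
      rw [h3]
      exact h2
    have hmid : min ((p - 1) + 1) (n - 1 - (p - 1)) = p := by omega
    simp only [hmid] at h
    omega
  have hS3bound : S3 ≤ 2 * (m : ℤ) * (p : ℤ) ^ 2 - 1 := by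
    have htotN : ∑ t ∈ range (n - 1), (Xt t).card
        = (Xt (p - 1)).card + ∑ t ∈ (range (n - 1)).erase (p - 1), (Xt t).card :=
      (Finset.add_sum_erase (range (n - 1)) (fun t => (Xt t).card) hmidmem).symm
    have herase : ∑ t ∈ (range (n - 1)).erase (p - 1), (Xt t).card
        ≤ 2 * (m * (p * p - p)) := by
      calc ∑ t ∈ (range (n - 1)).erase (p - 1), (Xt t).card
          ≤ ∑ t ∈ (range (n - 1)).erase (p - 1), 2 * (m * min (t + 1) (n - 1 - t)) :=
            Finset.sum_le_sum hboundLR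
        _ = 2 * (m * ∑ t ∈ (range (n - 1)).erase (p - 1), min (t + 1) (n - 1 - t)) := by
            rw [Finset.mul_sum, Finset.mul_sum]
        _ = 2 * (m * (p * p - p)) := by rw [hsum_min_erase]
    obtain ⟨A, hA⟩ : ∃ A, m * (p * p - p) = A := ⟨_, rfl⟩
    obtain ⟨B, hB⟩ : ∃ B, m * p = B := ⟨_, rfl⟩
    rw [hA] at herase
    have hN2 : N = 2 * B := by rw [hN, hnp, ← hB]; ring
    have hm2 : (Xt (p - 1)).card + 1 ≤ 2 * B := by omega
    have hmm : A + B = m * (p * p) := by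
      rw [← hA, ← hB, ← Nat.mul_add]
      congr 1
      exact Nat.sub_add_cancel (Nat.le_mul_of_pos_left p (by omega))
    have htot : ∑ t ∈ range (n - 1), (Xt t).card + 1 ≤ 2 * (A + B) := by
      rw [htotN]
      linarith [herase, hm2]
    have htot2 : ∑ t ∈ range (n - 1), (Xt t).card + 1 ≤ 2 * (m * (p * p)) := by
      rw [← hmm]; exact htot
    have hZ : ((∑ t ∈ range (n - 1), (Xt t).card : ℕ) : ℤ) + 1
        ≤ 2 * ((m : ℤ) * ((p : ℤ) * (p : ℤ))) := by exact_mod_cast htot2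
    rw [hS3N]
    have hq : 2 * ((m : ℤ) * ((p : ℤ) * (p : ℤ))) = 2 * (m : ℤ) * (p : ℤ) ^ 2 := by ring
    linarith [hZ, hq]
  -- span bound
  have hspan : ((f (v (N - 1)) : ℤ) - f (v 0)) ≤ (span f : ℤ) := by
    have hbdd : BddAbove (Set.range f) := (Set.finite_range f).bddAbove
    have h1 : f (v (N - 1)) ≤ sSup (Set.range f) := le_csSup hbdd ⟨v (N - 1), rfl⟩
    have h2 : sInf (Set.range f) ≤ f (v 0) := csInf_le (OrderBot.bddBelow _) ⟨v 0, rfl⟩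
    have h3 : sInf (Set.range f) ≤ sSup (Set.range f) :=
      le_trans (csInf_le (OrderBot.bddBelow _) ⟨v 0, rfl⟩) (le_csSup hbdd ⟨v 0, rfl⟩)
    unfold span
    push_cast [Nat.cast_sub h3]
    omega
  -- final combination
  have hfinal := hsum
  rw [hexp] at hfinal
  have hgoal : (2 * (m : ℤ) * (p : ℤ) ^ 2 + 2 * (p : ℤ) - 1 : ℤ) ≤ (span f : ℤ) := by
    have hprod : ((N : ℤ) - 1) * ((n : ℤ) + 2)
        = 4 * (m : ℤ) * (p : ℤ) ^ 2 + 4 * (m : ℤ) * (p : ℤ) - 2 * (p : ℤ) - 2 := by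
      have hNc : (N : ℤ) = 2 * (m : ℤ) * (p : ℤ) := by
        rw [hN, hnp]; push_cast; ring
      have hnc : (n : ℤ) = 2 * (p : ℤ) := by rw [hnp]; push_cast; ring
      rw [hNc, hnc]; ring
    have he0 := hev01 0
    have heN := hev01 (N - 1)
    have hnc : (n : ℤ) = 2 * (p : ℤ) := by rw [hnp]; push_cast; ring
    have hNc : (N : ℤ) = 2 * (m : ℤ) * (p : ℤ) := by
      rw [hN, hnp]; push_cast; ring
    rw [hprod] at hfinal
    rw [hE1, hE2, hnc] at hfinal
    linarith [hS3bound, hspan, hfinal, he0.1, he0.2, heN.1, heN.2, hNc]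
  have h1p : 1 ≤ 2 * m * p ^ 2 + 2 * p := by omega
  zify [h1p]
  push_cast at hgoal ⊢
  linarith [hgoal]


theorem rnBook_lower_bound (m n : ℕ) (hm : 3 ≤ m) (hn : Even n) (hn2 : 2 ≤ n) :
    m * n ^ 2 / 2 + n - 1 ≤ rnBook m n := by
  obtain ⟨p, hpp⟩ := hn
  have hnp : n = 2 * p := by omega
  have hp : 1 ≤ p := by omega
  -- the defining set is nonempty
  have hSne : {s | ∃ f : Fin m × Fin n → ℕ,
      IsRadioLabeling (bookGraph m n) (n + 1) f ∧ span f = s}.Nonempty := by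
    refine ⟨span (fun w => (n + 2) * ((finProdFinEquiv w : Fin (m * n)) : ℕ)),
      (fun w => (n + 2) * ((finProdFinEquiv w : Fin (m * n)) : ℕ)), ?_, rfl⟩
    intro u w hne
    have hne' : ((finProdFinEquiv u : Fin (m * n)) : ℕ) ≠ ((finProdFinEquiv w : Fin (m * n)) : ℕ) := by
      intro h
      exact hne (finProdFinEquiv.injective (Fin.ext h))
    set x := ((finProdFinEquiv u : Fin (m * n)) : ℕ)
    set y := ((finProdFinEquiv w : Fin (m * n)) : ℕ)
    have h1 : (1 : ℤ) ≤ |(x : ℤ) - (y : ℤ)| := by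
      apply Int.one_le_abs
      intro hc
      exact hne' (by exact_mod_cast sub_eq_zero.1 hc)
    have h2 : ((n : ℤ) + 2) ≤ |((n + 2) * x : ℤ) - ((n + 2) * y : ℤ)| := by
      rw [← mul_sub, abs_mul, abs_of_nonneg (by positivity : (0:ℤ) ≤ (n:ℤ) + 2)]
      nlinarith [h1]
    have hd : (0 : ℤ) ≤ ((bookGraph m n).dist u w : ℤ) := by positivity
    push_cast
    push_cast at h2
    linarith
  have hmem := Nat.sInf_mem hSne
  obtain ⟨f, hfrad, hfspan⟩ := hmem
  have hlow := span_lower m n p hm hp hnp f hfrad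
  rw [hfspan] at hlow
  have harith : m * n ^ 2 / 2 + n - 1 = 2 * m * p ^ 2 + 2 * p - 1 := by
    subst hnp
    have h1 : m * (2 * p) ^ 2 = (2 * m * p ^ 2) * 2 := by ring
    rw [h1, Nat.mul_div_cancel _ (by norm_num : 0 < 2)]
  rw [harith]
  exact hlow
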